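/- Ramanujan's general theta function f(a,b) = ∑_{n∈ℤ} a^{n(n+1)/2} b^{n(n-1)/2} satisfies the product formula f(a,b) = (−a; ab)_∞ (−b; ab)_∞ (ab; ab)_∞. -/

import Mathlib

open Filter Topology Finset

lemma RTP.hasProd_zero_of_zero {ι : Type*} {f : ι → ℂ} (i₀ : ι) (h : f i₀ = 0) :
    HasProd f 0 := by
  have : ∀ᶠ s : Finset ι in atTop, ∏ i ∈ s, f i = 0 := by
    filter_upwards [Filter.eventually_ge_atTop {i₀}] with s hs
    exact Finset.prod_eq_zero (hs (Finset.mem_singleton_self i₀)) h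
  exact Tendsto.congr' (this.mono fun s hs => hs.symm) tendsto_const_nhds

lemma RTP.eventually_small (u q : ℂ) (hq : ‖q‖ < 1) :
    ∀ᶠ n : ℕ in atTop, ‖u * q ^ n‖ ≤ 1 / 2 := by
  have h0 : Tendsto (fun n : ℕ => ‖u * q ^ n‖) atTop (𝓝 0) := by
    have h1 : Tendsto (fun n : ℕ => ‖u‖ * ‖q‖ ^ n) atTop (𝓝 (‖u‖ * 0)) :=
      (tendsto_pow_atTop_nhds_zero_of_lt_one (norm_nonneg q) hq).const_mul ‖u‖
    rw [mul_zero] at h1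
    exact h1.congr fun n => by rw [norm_mul, norm_pow]
  exact h0.eventually_le_const (by norm_num : (0:ℝ) < 1/2)

lemma RTP.multipliable_one_add_geom (u q : ℂ) (hq : ‖q‖ < 1) :
    Multipliable (fun n : ℕ => 1 + u * q ^ n) := by
  by_cases hz : ∃ k, 1 + u * q ^ k = 0
  · obtain ⟨k, hk⟩ := hz
    exact ⟨0, RTP.hasProd_zero_of_zero k hk⟩
  push_neg at hz
  have hlog : Summable (fun n : ℕ => Complex.log (1 + u * q ^ n)) := by
    have hg : Summable (fun n : ℕ => 2 * ‖u‖ * ‖q‖ ^ n) :=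
      (summable_geometric_of_lt_one (norm_nonneg q) hq).mul_left (2 * ‖u‖)
    refine Summable.of_norm_bounded_eventually_nat hg ?_
    filter_upwards [RTP.eventually_small u q hq] with n hn
    have h1 : ‖u * q ^ n‖ < 1 := lt_of_le_of_lt hn (by norm_num)
    have h3 : (0:ℝ) ≤ ‖u * q ^ n‖ := norm_nonneg _
    have h2 : (1 - ‖u * q ^ n‖)⁻¹ ≤ 2 := by
      rw [inv_le_comm₀ (by linarith) (by norm_num)]
      linarith
    calc ‖Complex.log (1 + u * q ^ n)‖
        ≤ ‖u * q ^ n‖ ^ 2 * (1 - ‖u * q ^ n‖)⁻¹ / 2 + ‖u * q ^ n‖ :=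
          Complex.norm_log_one_add_le h1
      _ ≤ 2 * ‖u * q ^ n‖ := by nlinarith
      _ = 2 * ‖u‖ * ‖q‖ ^ n := by rw [norm_mul, norm_pow, mul_assoc]
  exact Complex.multipliable_of_summable_log hlog

lemma RTP.exp_neg_two_le (x : ℝ) (hx0 : 0 ≤ x) (hx : x ≤ 1/2) :
    Real.exp (-(2 * x)) ≤ 1 - x := by
  have h1 : 1 + 2 * x ≤ Real.exp (2 * x) := by
    have := Real.add_one_le_exp (2 * x); linarith
  have hp : (0:ℝ) < Real.exp (-(2 * x)) := Real.exp_pos _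
  have key : Real.exp (-(2*x)) * Real.exp (2*x) = 1 := by
    rw [← Real.exp_add]; simp
  have hA : Real.exp (-(2*x)) * (1 + 2*x) ≤ 1 := by
    calc Real.exp (-(2*x)) * (1 + 2*x) ≤ Real.exp (-(2*x)) * Real.exp (2*x) :=
          mul_le_mul_of_nonneg_left h1 hp.le
      _ = 1 := key
  nlinarith

namespace RTP

variable {q : ℂ}

/-- partial product `(q;q)_k` (shifted): `∏_{i<k} (1 - q^{i+1})`. -/
noncomputable def D (q : ℂ) (k : ℕ) : ℂ := ∏ i ∈ Finset.range k, (1 - q ^ (i + 1))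

lemma D_zero : D q 0 = 1 := by simp [D]

lemma D_succ (k : ℕ) : D q (k + 1) = D q k * (1 - q ^ (k + 1)) :=
  Finset.prod_range_succ _ _

lemma factor_ne (hq : ‖q‖ < 1) (i : ℕ) : 1 - q ^ (i + 1) ≠ 0 := by
  intro h
  rw [sub_eq_zero] at h
  have h1 : ‖q ^ (i + 1)‖ < 1 := by
    rw [norm_pow]
    exact pow_lt_one₀ (norm_nonneg q) hq (Nat.succ_ne_zero i)
  rw [← h] at h1
  simp at h1

lemma D_ne (hq : ‖q‖ < 1) (k : ℕ) : D q k ≠ 0 :=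
  Finset.prod_ne_zero_iff.2 fun i _ => factor_ne hq i

/-- Gaussian binomial `[N, K]_q` as ratio of `D`s, extended by 0. -/
noncomputable def G (q : ℂ) (N : ℕ) (K : ℤ) : ℂ :=
  if 0 ≤ K ∧ K ≤ N then D q N / (D q K.toNat * D q (N - K.toNat)) else 0

lemma G_of_lt {N : ℕ} {K : ℤ} (h : K < 0) : G q N K = 0 := by
  rw [G, if_neg]; omega

lemma G_of_gt {N : ℕ} {K : ℤ} (h : (N : ℤ) < K) : G q N K = 0 := by
  rw [G, if_neg]; omega

lemma G_nat {N k : ℕ} (h : k ≤ N) :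
    G q N (k : ℤ) = D q N / (D q k * D q (N - k)) := by
  rw [G, if_pos ⟨Int.natCast_nonneg k, by exact_mod_cast h⟩, Int.toNat_natCast]

lemma G_zero (hq : ‖q‖ < 1) (N : ℕ) : G q N 0 = 1 := by
  have := G_nat (q := q) (Nat.zero_le N)
  norm_num [D_zero] at this ⊢
  rw [this, div_self (D_ne hq N)]

lemma G_top (hq : ‖q‖ < 1) (N : ℕ) : G q N N = 1 := by
  rw [G_nat le_rfl, Nat.sub_self, D_zero, mul_one, div_self (D_ne hq N)]

lemma pascalA (hq : ‖q‖ < 1) (hq0 : q ≠ 0) (N : ℕ) (K : ℤ) :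
    G q (N + 1) K = G q N K + q ^ ((N : ℤ) + 1 - K) * G q N (K - 1) := by
  rcases lt_or_ge K 0 with hK | hK
  · rw [G_of_lt hK, G_of_lt hK, G_of_lt (by omega : K - 1 < 0)]; ring
  obtain ⟨k, rfl⟩ := Int.eq_ofNat_of_zero_le hK
  rcases Nat.lt_or_ge N k with hNk | hNk
  · by_cases hk1 : k = N + 1
    · subst hk1
      rw [show ((N + 1 : ℕ) : ℤ) - 1 = (N : ℤ) from by push_cast; ring,
        G_top hq, G_of_gt (by exact_mod_cast hNk), G_top hq,
        show (N : ℤ) + 1 - ((N + 1 : ℕ) : ℤ) = 0 from by push_cast; ring]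
      simp
    · rw [G_of_gt (by exact_mod_cast (by omega : N + 1 < k)),
        G_of_gt (by exact_mod_cast hNk),
        G_of_gt (show (N : ℤ) < (k : ℤ) - 1 from by
          have : N + 2 ≤ k := by omega
          push_cast; omega)]
      ring
  · by_cases hk0 : k = 0
    · subst hk0
      simp only [Nat.cast_zero]
      rw [G_zero hq, G_zero hq, G_of_lt (show (0 : ℤ) - 1 < 0 from by norm_num)]
      ring
    · obtain ⟨j, rfl⟩ : ∃ j, k = j + 1 := ⟨k - 1, by omega⟩
      obtain ⟨i, rfl⟩ : ∃ i, N = j + 1 + i := ⟨N - (j + 1), by omega⟩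
      have e1 : ((j + 1 + i : ℕ) : ℤ) + 1 - ((j + 1 : ℕ) : ℤ) = ((i + 1 : ℕ) : ℤ) := by
        push_cast; ring
      have e2 : ((j + 1 : ℕ) : ℤ) - 1 = ((j : ℕ) : ℤ) := by push_cast; ring
      rw [e2, e1, zpow_natCast,
        show j + 1 + i + 1 = (j + 1 + i) + 1 from rfl,
        G_nat (by omega), G_nat (by omega), G_nat (by omega),
        show j + 1 + i + 1 - (j + 1) = i + 1 from by omega,
        show j + 1 + i - (j + 1) = i from by omega,
        show j + 1 + i - j = i + 1 from by omega,
        D_succ (j + 1 + i), D_succ i, D_succ j]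
      have h1 := D_ne hq (j + 1 + i)
      have h2 := D_ne hq j
      have h3 := D_ne hq i
      have f1 := factor_ne hq (j + 1 + i)
      have f2 := factor_ne hq i
      have f3 := factor_ne hq j
      field_simp
      ring

lemma pascalB (hq : ‖q‖ < 1) (hq0 : q ≠ 0) (N : ℕ) (K : ℤ) :
    G q (N + 1) K = G q N (K - 1) + q ^ K * G q N K := by
  rcases lt_or_ge K 0 with hK | hK
  · rw [G_of_lt hK, G_of_lt hK, G_of_lt (by omega : K - 1 < 0)]; ring
  obtain ⟨k, rfl⟩ := Int.eq_ofNat_of_zero_le hK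
  rcases Nat.lt_or_ge N k with hNk | hNk
  · by_cases hk1 : k = N + 1
    · subst hk1
      rw [show ((N + 1 : ℕ) : ℤ) - 1 = (N : ℤ) from by push_cast; ring,
        G_top hq, G_top hq, G_of_gt (by exact_mod_cast hNk)]
      ring
    · rw [G_of_gt (N := N + 1) (K := (k : ℤ)) (by exact_mod_cast (by omega : N + 1 < k)),
        G_of_gt (N := N) (K := (k : ℤ)) (by exact_mod_cast hNk),
        G_of_gt (N := N) (K := (k : ℤ) - 1) (show (N : ℤ) < (k : ℤ) - 1 from by
          have : N + 2 ≤ k := by omega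
          push_cast; omega)]
      ring
  · by_cases hk0 : k = 0
    · subst hk0
      simp only [Nat.cast_zero]
      rw [G_zero hq, G_zero hq, G_of_lt (show (0 : ℤ) - 1 < 0 from by norm_num)]
      simp
    · obtain ⟨j, rfl⟩ : ∃ j, k = j + 1 := ⟨k - 1, by omega⟩
      obtain ⟨i, rfl⟩ : ∃ i, N = j + 1 + i := ⟨N - (j + 1), by omega⟩
      have e2 : ((j + 1 : ℕ) : ℤ) - 1 = ((j : ℕ) : ℤ) := by push_cast; ring
      rw [e2, zpow_natCast,
        show j + 1 + i + 1 = (j + 1 + i) + 1 from rfl,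
        G_nat (by omega), G_nat (by omega), G_nat (by omega),
        show j + 1 + i + 1 - (j + 1) = i + 1 from by omega,
        show j + 1 + i - (j + 1) = i from by omega,
        show j + 1 + i - j = i + 1 from by omega,
        D_succ (j + 1 + i), D_succ i, D_succ j]
      have h1 := D_ne hq (j + 1 + i)
      have h2 := D_ne hq j
      have h3 := D_ne hq i
      have f1 := factor_ne hq (j + 1 + i)
      have f2 := factor_ne hq i
      have f3 := factor_ne hq j
      field_simp
      ring


/-- theta summand -/
noncomputable def t (a b : ℂ) (n : ℤ) : ℂ := a ^ (n * (n + 1) / 2) * b ^ (n * (n - 1) / 2)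

lemma texp (J : ℤ) : ∃ c : ℤ, J * (J + 1) / 2 = c + J ∧ J * (J - 1) / 2 = c ∧
    (J - 1) * (J - 1 + 1) / 2 = c ∧ (J - 1) * (J - 1 - 1) / 2 = c - J + 1 ∧
    (J + 1) * (J + 1 + 1) / 2 = c + 2 * J + 1 ∧ (J + 1) * (J + 1 - 1) / 2 = c + J := by
  obtain ⟨c, hc⟩ : Even ((J - 1) * J) := Int.even_mul_succ_self (J - 1) |>.imp
    fun c h => by linarith [h]
  have h2 : (J - 1) * J = 2 * c := by linarith
  have h2' : (2 : ℤ) ≠ 0 := by norm_num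
  refine ⟨c, ?_, ?_, ?_, ?_, ?_, ?_⟩
  · rw [show J * (J + 1) = 2 * (c + J) from by linear_combination h2,
      Int.mul_ediv_cancel_left _ h2']
  · rw [show J * (J - 1) = 2 * c from by linear_combination h2,
      Int.mul_ediv_cancel_left _ h2']
  · rw [show (J - 1) * (J - 1 + 1) = 2 * c from by linear_combination h2,
      Int.mul_ediv_cancel_left _ h2']
  · rw [show (J - 1) * (J - 1 - 1) = 2 * (c - J + 1) from by linear_combination h2,
      Int.mul_ediv_cancel_left _ h2']
  · rw [show (J + 1) * (J + 1 + 1) = 2 * (c + 2 * J + 1) from by linear_combination h2,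
      Int.mul_ediv_cancel_left _ h2']
  · rw [show (J + 1) * (J + 1 - 1) = 2 * (c + J) from by linear_combination h2,
      Int.mul_ediv_cancel_left _ h2']

lemma t_succ (ha : a ≠ 0) (hb : b ≠ 0) (J : ℤ) :
    t a b (J + 1) = a * (a * b) ^ J * t a b J := by
  obtain ⟨c, h1, h2, _, _, h5, h6⟩ := texp J
  unfold t
  rw [h1, h2, h5, h6, mul_zpow]
  symm
  calc a * (a ^ J * b ^ J) * (a ^ (c + J) * b ^ c)
      = (a * a ^ J) * a ^ (c + J) * (b ^ J * b ^ c) := by ring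
    _ = a ^ (1 + J) * a ^ (c + J) * b ^ (J + c) := by
        rw [← zpow_one_add₀ ha, ← zpow_add₀ hb]
    _ = a ^ (1 + J + (c + J)) * b ^ (J + c) := by rw [← zpow_add₀ ha]
    _ = a ^ (c + 2 * J + 1) * b ^ (c + J) := by
        rw [show 1 + J + (c + J) = c + 2 * J + 1 from by ring,
          show J + c = c + J from by ring]

lemma t_pred (ha : a ≠ 0) (hb : b ≠ 0) (J : ℤ) :
    t a b (J - 1) = b * ((a * b) ^ J)⁻¹ * t a b J := by
  obtain ⟨c, h1, h2, h3, h4, _, _⟩ := texp J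
  unfold t
  rw [h1, h2, h3, h4, ← zpow_neg, mul_zpow]
  symm
  calc b * (a ^ (-J) * b ^ (-J)) * (a ^ (c + J) * b ^ c)
      = a ^ (-J) * a ^ (c + J) * ((b * b ^ (-J)) * b ^ c) := by ring
    _ = a ^ (-J + (c + J)) * (b ^ (1 + -J) * b ^ c) := by
        rw [← zpow_add₀ ha, ← zpow_one_add₀ hb]
    _ = a ^ (-J + (c + J)) * b ^ (1 + -J + c) := by rw [← zpow_add₀ hb]
    _ = a ^ c * b ^ (c - J + 1) := by
        rw [show -J + (c + J) = c from by ring, show 1 + -J + c = c - J + 1 from by ring]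

lemma t_zero : t a b 0 = 1 := by simp [t]


/-- Uniform upper bound for `‖D q k‖`. -/
lemma D_norm_le (hq : ‖q‖ < 1) (k : ℕ) :
    ‖D q k‖ ≤ Real.exp (‖q‖ / (1 - ‖q‖)) := by
  have h1 : ‖D q k‖ ≤ ∏ i ∈ Finset.range k, Real.exp (‖q‖ ^ (i + 1)) := by
    refine le_trans (norm_prod_le _ _) (Finset.prod_le_prod (fun i _ => norm_nonneg _) ?_)
    intro i _
    calc ‖1 - q ^ (i + 1)‖ ≤ ‖(1 : ℂ)‖ + ‖q ^ (i + 1)‖ := norm_sub_le _ _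
      _ = ‖q‖ ^ (i + 1) + 1 := by rw [norm_one, norm_pow]; ring
      _ ≤ Real.exp (‖q‖ ^ (i + 1)) := Real.add_one_le_exp _
  rw [← Real.exp_sum] at h1
  refine h1.trans (Real.exp_le_exp.2 ?_)
  have h2 : ∑ i ∈ Finset.range k, ‖q‖ ^ (i + 1) = ‖q‖ * ∑ i ∈ Finset.range k, ‖q‖ ^ i := by
    rw [Finset.mul_sum]; exact Finset.sum_congr rfl fun i _ => by ring
  rw [h2, div_eq_mul_inv]
  refine mul_le_mul_of_nonneg_left ?_ (norm_nonneg q)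
  calc ∑ i ∈ Finset.range k, ‖q‖ ^ i ≤ ∑' i : ℕ, ‖q‖ ^ i :=
        Summable.sum_le_tsum _ (fun i _ => pow_nonneg (norm_nonneg q) i)
          (summable_geometric_of_lt_one (norm_nonneg q) hq)
    _ = (1 - ‖q‖)⁻¹ := tsum_geometric_of_lt_one (norm_nonneg q) hq

/-- Uniform positive lower bound for the real products `∏ (1 - ‖q‖^{i+1})`. -/
lemma exists_lb (hq : ‖q‖ < 1) :
    ∃ B : ℝ, 0 < B ∧ ∀ k, B ≤ ∏ i ∈ Finset.range k, (1 - ‖q‖ ^ (i + 1)) := by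
  set r := ‖q‖ with hr
  have hr0 : 0 ≤ r := norm_nonneg q
  have hfac : ∀ i : ℕ, 0 < 1 - r ^ (i + 1) := fun i => by
    have := pow_lt_one₀ hr0 hq (Nat.succ_ne_zero i)
    simp only [Nat.succ_eq_add_one] at this; linarith
  obtain ⟨N₀, hN₀⟩ : ∃ N₀, ∀ i ≥ N₀, r ^ (i + 1) ≤ 1/2 := by
    have h0 : Tendsto (fun i : ℕ => r ^ (i + 1)) atTop (𝓝 0) := by
      have := (tendsto_pow_atTop_nhds_zero_of_lt_one hr0 hq)
      exact this.comp (tendsto_add_atTop_nat 1)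
    exact eventually_atTop.1 (h0.eventually_le_const (by norm_num : (0:ℝ) < 1/2))
  have hsum : ∀ s : Finset ℕ, ∑ i ∈ s, r ^ (i + 1) ≤ r / (1 - r) := by
    intro s
    have h1 : ∑ i ∈ s, r ^ (i + 1) ≤ ∑' i : ℕ, r ^ (i + 1) :=
      Summable.sum_le_tsum s (fun i _ => pow_nonneg hr0 _)
        (((summable_geometric_of_lt_one hr0 hq).mul_left r).congr fun i => by ring)
    have h2 : ∑' i : ℕ, r ^ (i + 1) = r * (1 - r)⁻¹ := by
      calc ∑' i : ℕ, r ^ (i + 1) = ∑' i : ℕ, r * r ^ i := by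
            exact tsum_congr fun i => by ring
        _ = r * ∑' i : ℕ, r ^ i := tsum_mul_left
        _ = r * (1 - r)⁻¹ := by rw [tsum_geometric_of_lt_one hr0 hq]
    rw [div_eq_mul_inv]; exact h1.trans h2.le
  refine ⟨(∏ i ∈ Finset.range N₀, (1 - r ^ (i + 1))) * Real.exp (-(2 * (r / (1 - r)))), ?_, ?_⟩
  · exact mul_pos (Finset.prod_pos fun i _ => hfac i) (Real.exp_pos _)
  intro k
  rcases le_or_gt k N₀ with hk | hk
  · have h1 : ∏ i ∈ Finset.range N₀, (1 - r ^ (i + 1)) ≤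
        ∏ i ∈ Finset.range k, (1 - r ^ (i + 1)) := by
      rw [← Finset.prod_range_mul_prod_Ico _ hk]
      have h2 : ∏ i ∈ Finset.Ico k N₀, (1 - r ^ (i + 1)) ≤ 1 :=
        Finset.prod_le_one (fun i _ => (hfac i).le) (fun i _ => by
          have : 0 ≤ r ^ (i+1) := pow_nonneg hr0 _; linarith)
      calc (∏ i ∈ Finset.range k, (1 - r ^ (i + 1))) * ∏ i ∈ Finset.Ico k N₀, (1 - r ^ (i + 1))
          ≤ (∏ i ∈ Finset.range k, (1 - r ^ (i + 1))) * 1 :=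
            mul_le_mul_of_nonneg_left h2 (Finset.prod_nonneg fun i _ => (hfac i).le)
        _ = _ := mul_one _
    calc (∏ i ∈ Finset.range N₀, (1 - r ^ (i + 1))) * Real.exp (-(2 * (r / (1 - r))))
        ≤ (∏ i ∈ Finset.range N₀, (1 - r ^ (i + 1))) * 1 := by
          refine mul_le_mul_of_nonneg_left ?_ (Finset.prod_nonneg fun i _ => (hfac i).le)
          rw [Real.exp_le_one_iff]
          have : 0 ≤ r / (1 - r) := div_nonneg hr0 (by linarith)
          linarith
      _ = ∏ i ∈ Finset.range N₀, (1 - r ^ (i + 1)) := mul_one _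
      _ ≤ _ := h1
  · rw [← Finset.prod_range_mul_prod_Ico _ hk.le]
    refine mul_le_mul ?_ ?_ (Real.exp_pos _).le (Finset.prod_nonneg fun i _ => (hfac i).le)
    · exact le_refl _
    · calc Real.exp (-(2 * (r / (1 - r))))
          ≤ Real.exp (-(2 * ∑ i ∈ Finset.Ico N₀ k, r ^ (i + 1))) := by
            refine Real.exp_le_exp.2 ?_
            have := hsum (Finset.Ico N₀ k)
            linarith
        _ = ∏ i ∈ Finset.Ico N₀ k, Real.exp (-(2 * r ^ (i + 1))) := by
            rw [show -(2 * ∑ i ∈ Finset.Ico N₀ k, r ^ (i + 1))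
                = ∑ i ∈ Finset.Ico N₀ k, -(2 * r ^ (i + 1)) from by
              rw [Finset.mul_sum, ← Finset.sum_neg_distrib], Real.exp_sum]
        _ ≤ ∏ i ∈ Finset.Ico N₀ k, (1 - r ^ (i + 1)) := by
            refine Finset.prod_le_prod (fun i _ => (Real.exp_pos _).le) ?_
            intro i hi
            exact exp_neg_two_le _ (pow_nonneg hr0 _) (hN₀ i (Finset.mem_Ico.1 hi).1)

lemma D_norm_ge (hq : ‖q‖ < 1) (k : ℕ) :
    ∏ i ∈ Finset.range k, (1 - ‖q‖ ^ (i + 1)) ≤ ‖D q k‖ := by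
  rw [D, norm_prod]
  refine Finset.prod_le_prod (fun i _ => ?_) (fun i _ => ?_)
  · have := pow_lt_one₀ (norm_nonneg q) hq (Nat.succ_ne_zero i)
    simp only [Nat.succ_eq_add_one] at this; linarith
  · calc 1 - ‖q‖ ^ (i + 1) = ‖(1:ℂ)‖ - ‖q ^ (i + 1)‖ := by rw [norm_one, norm_pow]
      _ ≤ ‖1 - q ^ (i + 1)‖ := norm_sub_norm_le _ _


variable {a b : ℂ}

lemma dagger (hq : ‖q‖ < 1) (hq0 : q ≠ 0) (m : ℕ) (K : ℤ) :
    G q (2 * m + 2) K = G q (2 * m) (K - 1) * (1 + q ^ (2 * m + 1)) +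
      q ^ K * G q (2 * m) K + q ^ ((2 * m : ℤ) + 2 - K) * G q (2 * m) (K - 2) := by
  rw [show 2 * m + 2 = (2 * m + 1) + 1 from rfl, pascalA hq hq0 (2 * m + 1) K,
    pascalB hq hq0 (2 * m) K, pascalB hq hq0 (2 * m) (K - 1),
    show K - 1 - 1 = K - 2 from by ring]
  have h1 : ((2 * m + 1 : ℕ) : ℤ) + 1 - K = (2 * m : ℤ) + 2 - K := by push_cast; ring
  rw [h1]
  have h2 : q ^ ((2 * m : ℤ) + 2 - K) * q ^ (K - 1) = q ^ (2 * m + 1) := by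
    rw [← zpow_natCast q (2 * m + 1), ← zpow_add₀ hq0]
    congr 1; push_cast; ring
  linear_combination G q (2 * m) (K - 1) * h2

lemma finite_identity (ha : a ≠ 0) (hb : b ≠ 0) (hq : ‖a * b‖ < 1) (m : ℕ) :
    ∑ K ∈ Finset.Icc (-(m : ℤ)) m, G (a * b) (2 * m) (K + m) * t a b K
      = ∏ k ∈ Finset.range m, ((1 + a * (a * b) ^ k) * (1 + b * (a * b) ^ k)) := by
  have hq0 : a * b ≠ 0 := mul_ne_zero ha hb
  set q : ℂ := a * b with hqdef
  induction m with
  | zero =>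
    simp only [Nat.cast_zero, neg_zero, Finset.Icc_self, Finset.sum_singleton,
      Finset.range_zero, Finset.prod_empty, mul_zero, zero_add, add_zero]
    rw [t_zero, G_zero hq, mul_one]
  | succ m ih =>
    have hterm : ∀ K ∈ Finset.Icc (-((m : ℤ) + 1)) ((m : ℤ) + 1),
        G q (2 * (m + 1)) (K + ((m + 1 : ℕ) : ℤ)) * t a b K
          = G q (2 * m) (K + m) * t a b K * (1 + q ^ (2 * m + 1)) +
            q ^ (K + (m : ℤ) + 1) * G q (2 * m) (K + (m : ℤ) + 1) * t a b K +
            q ^ ((m : ℤ) + 1 - K) * G q (2 * m) (K + (m : ℤ) - 1) * t a b K := by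
      intro K _
      rw [show 2 * (m + 1) = 2 * m + 2 from by ring, dagger hq hq0,
        show K + ((m + 1 : ℕ) : ℤ) - 1 = K + m from by push_cast; ring,
        show K + ((m + 1 : ℕ) : ℤ) = K + (m : ℤ) + 1 from by push_cast; ring,
        show K + (m : ℤ) + 1 - 2 = K + (m : ℤ) - 1 from by ring,
        show (2 * m : ℤ) + 2 - (K + (m : ℤ) + 1) = (m : ℤ) + 1 - K from by push_cast; ring]
      ring
    have hIcc : Finset.Icc (-((m + 1 : ℕ) : ℤ)) ((m + 1 : ℕ) : ℤ)
        = Finset.Icc (-((m : ℤ) + 1)) ((m : ℤ) + 1) := by push_cast; rfl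
    rw [hIcc, Finset.sum_congr rfl hterm, Finset.sum_add_distrib, Finset.sum_add_distrib]
    -- Sum 1
    have hS1 : ∑ K ∈ Finset.Icc (-((m : ℤ) + 1)) ((m : ℤ) + 1),
        G q (2 * m) (K + m) * t a b K * (1 + q ^ (2 * m + 1))
        = (∑ K ∈ Finset.Icc (-(m : ℤ)) m, G q (2 * m) (K + m) * t a b K)
            * (1 + q ^ (2 * m + 1)) := by
      rw [← Finset.sum_mul]
      congr 1
      refine (Finset.sum_subset (Finset.Icc_subset_Icc (by omega) (by omega)) ?_).symm
      intro K hK hK'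
      simp only [Finset.mem_Icc] at hK hK'
      rcases (by omega : K = (m : ℤ) + 1 ∨ K = -((m : ℤ) + 1)) with h | h
      · rw [h, G_of_gt (by push_cast; omega), zero_mul]
      · rw [h, G_of_lt (by omega), zero_mul]
    -- Sum 2 : shift K = J - 1
    have hS2 : ∑ K ∈ Finset.Icc (-((m : ℤ) + 1)) ((m : ℤ) + 1),
        q ^ (K + (m : ℤ) + 1) * G q (2 * m) (K + (m : ℤ) + 1) * t a b K
        = b * q ^ (m : ℤ) *
          ∑ K ∈ Finset.Icc (-(m : ℤ)) m, G q (2 * m) (K + m) * t a b K := by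
      rw [show Finset.Icc (-((m : ℤ) + 1)) ((m : ℤ) + 1)
            = (Finset.Icc (-(m : ℤ)) ((m : ℤ) + 2)).map
                (addRightEmbedding (-1 : ℤ)) from by
          rw [Finset.map_add_right_Icc]; congr 1 <;> ring,
        Finset.sum_map]
      simp only [addRightEmbedding_apply]
      have hsub : ∀ J ∈ Finset.Icc (-(m : ℤ)) ((m : ℤ) + 2),
          J ∉ Finset.Icc (-(m : ℤ)) (m : ℤ) →
          q ^ (J + -1 + (m : ℤ) + 1) * G q (2 * m) (J + -1 + (m : ℤ) + 1) * t a b (J + -1) = 0 := by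
        intro J hJ hJ'
        simp only [Finset.mem_Icc] at hJ hJ'
        rw [show J + -1 + (m : ℤ) + 1 = J + m from by ring,
          G_of_gt (by push_cast; omega), mul_zero, zero_mul]
      rw [← Finset.sum_subset (Finset.Icc_subset_Icc (by omega) (by omega)) hsub,
        Finset.mul_sum]
      refine Finset.sum_congr rfl fun J hJ => ?_
      rw [show J + -1 = J - 1 from by ring, t_pred ha hb J, ← hqdef,
        show J - 1 + (m : ℤ) + 1 = J + m from by ring,
        show J + (m : ℤ) = m + J from by ring, zpow_add₀ hq0]
      have hqJ : (q : ℂ) ^ J ≠ 0 := zpow_ne_zero J hq0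
      field_simp
    -- Sum 3 : shift K = J + 1
    have hS3 : ∑ K ∈ Finset.Icc (-((m : ℤ) + 1)) ((m : ℤ) + 1),
        q ^ ((m : ℤ) + 1 - K) * G q (2 * m) (K + (m : ℤ) - 1) * t a b K
        = a * q ^ (m : ℤ) *
          ∑ K ∈ Finset.Icc (-(m : ℤ)) m, G q (2 * m) (K + m) * t a b K := by
      rw [show Finset.Icc (-((m : ℤ) + 1)) ((m : ℤ) + 1)
            = (Finset.Icc (-(m : ℤ) - 2) (m : ℤ)).map
                (addRightEmbedding (1 : ℤ)) from by
          rw [Finset.map_add_right_Icc]; congr 1 <;> ring,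
        Finset.sum_map]
      simp only [addRightEmbedding_apply]
      have hsub : ∀ J ∈ Finset.Icc (-(m : ℤ) - 2) (m : ℤ),
          J ∉ Finset.Icc (-(m : ℤ)) (m : ℤ) →
          q ^ ((m : ℤ) + 1 - (J + 1)) * G q (2 * m) (J + 1 + (m : ℤ) - 1) * t a b (J + 1) = 0 := by
        intro J hJ hJ'
        simp only [Finset.mem_Icc] at hJ hJ'
        rw [show J + 1 + (m : ℤ) - 1 = J + m from by ring,
          G_of_lt (by omega), mul_zero, zero_mul]
      rw [← Finset.sum_subset (Finset.Icc_subset_Icc (by omega) (by omega)) hsub,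
        Finset.mul_sum]
      refine Finset.sum_congr rfl fun J hJ => ?_
      rw [t_succ ha hb J, ← hqdef, show J + 1 + (m : ℤ) - 1 = J + m from by ring,
        show (m : ℤ) + 1 - (J + 1) = (m : ℤ) + -J from by ring, zpow_add₀ hq0]
      have hqJ : (q : ℂ) ^ J ≠ 0 := zpow_ne_zero J hq0
      rw [zpow_neg]
      field_simp
    rw [hS1, hS2, hS3, ih, Finset.prod_range_succ]
    have hpow : (q : ℂ) ^ ((m : ℤ)) = q ^ (m : ℕ) := zpow_natCast q m
    rw [hpow]
    have hq2 : (q : ℂ) ^ (2 * m + 1) = (a * (a * b) ^ m) * (b * (a * b) ^ m) := by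
      rw [hqdef]; ring
    rw [hq2]
    ring


lemma G_norm_le {A B : ℝ} (hq : ‖q‖ < 1) (hA : ∀ k, ‖D q k‖ ≤ A)
    (hB0 : 0 < B) (hB : ∀ k, B ≤ ‖D q k‖) (N : ℕ) (K : ℤ) :
    ‖G q N K‖ ≤ A / (B * B) := by
  have hA0 : 0 < A := lt_of_lt_of_le (hB0.trans_le (hB 0)) (hA 0)
  rw [G]
  split_ifs with h
  · rw [norm_div, norm_mul]
    refine div_le_div₀ hA0.le (hA N) (mul_pos hB0 hB0) ?_
    exact mul_le_mul (hB _) (hB _) hB0.le (norm_nonneg _)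
  · rw [norm_zero]
    positivity

lemma main_ne (a b : ℂ) (ha : a ≠ 0) (hb : b ≠ 0) (hab : ‖a * b‖ < 1) :
    ∑' n : ℤ, a ^ (n * (n + 1) / 2) * b ^ (n * (n - 1) / 2) =
      (∏' n : ℕ, (1 + a * (a * b) ^ n)) * (∏' n : ℕ, (1 + b * (a * b) ^ n)) *
        ∏' n : ℕ, (1 - (a * b) ^ (n + 1)) := by
  have hq0 : a * b ≠ 0 := mul_ne_zero ha hb
  set q : ℂ := a * b with hqdef
  -- multipliability and limits of partial products
  have hMa : Multipliable (fun n : ℕ => 1 + a * q ^ n) := multipliable_one_add_geom a q hab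
  have hMb : Multipliable (fun n : ℕ => 1 + b * q ^ n) := multipliable_one_add_geom b q hab
  have hMe : Multipliable (fun n : ℕ => 1 - q ^ (n + 1)) := by
    refine (multipliable_congr (g := fun n : ℕ => 1 - q ^ (n + 1)) fun n => ?_).1
      (multipliable_one_add_geom (-q) q hab)
    show 1 + -q * q ^ n = 1 - q ^ (n + 1)
    rw [pow_succ]; ring
  set Pa := ∏' n : ℕ, (1 + a * q ^ n) with hPa
  set Pb := ∏' n : ℕ, (1 + b * q ^ n) with hPb
  set E := ∏' n : ℕ, (1 - q ^ (n + 1)) with hE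
  have hTa : Tendsto (fun m => ∏ k ∈ Finset.range m, (1 + a * q ^ k)) atTop (𝓝 Pa) :=
    hMa.hasProd.tendsto_prod_nat
  have hTb : Tendsto (fun m => ∏ k ∈ Finset.range m, (1 + b * q ^ k)) atTop (𝓝 Pb) :=
    hMb.hasProd.tendsto_prod_nat
  have hTD : Tendsto (fun k => D q k) atTop (𝓝 E) := hMe.hasProd.tendsto_prod_nat
  -- bounds
  obtain ⟨B, hB0, hBle⟩ := exists_lb hab
  set A := Real.exp (‖q‖ / (1 - ‖q‖)) with hA
  have hBD : ∀ k, B ≤ ‖D q k‖ := fun k => (hBle k).trans (D_norm_ge hab k)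
  have hDA : ∀ k, ‖D q k‖ ≤ A := D_norm_le hab
  have hEB : B ≤ ‖E‖ := ge_of_tendsto' hTD.norm hBD
  have hE0 : E ≠ 0 := by
    intro h
    rw [h, norm_zero] at hEB
    linarith
  -- summability of the theta terms
  have hsum : Summable (fun n : ℤ => ‖t a b n‖) := by
    have hpos : Summable (fun n : ℕ => ‖t a b (n : ℤ)‖) := by
      refine summable_of_ratio_norm_eventually_le (r := 1/2) (by norm_num) ?_
      filter_upwards [eventually_small a q hab] with n hn
      have h1 : t a b ((n : ℤ) + 1) = a * q ^ (n : ℤ) * t a b n := t_succ ha hb n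
      rw [show ((n + 1 : ℕ) : ℤ) = (n : ℤ) + 1 from by push_cast; ring, h1]
      rw [norm_norm, norm_norm, norm_mul]
      have h2 : ‖a * q ^ (n : ℤ)‖ ≤ 1/2 := by
        rw [zpow_natCast]; exact hn
      exact mul_le_mul_of_nonneg_right h2 (norm_nonneg _)
    have hneg : Summable (fun n : ℕ => ‖t a b (-(n : ℤ))‖) := by
      refine summable_of_ratio_norm_eventually_le (r := 1/2) (by norm_num) ?_
      filter_upwards [eventually_small b q hab] with n hn
      have h1 : t a b (-(n : ℤ) - 1) = b * ((q ^ (-(n : ℤ)))⁻¹) * t a b (-(n : ℤ)) :=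
        t_pred ha hb _
      rw [show -((n + 1 : ℕ) : ℤ) = -(n : ℤ) - 1 from by push_cast; ring, h1]
      rw [norm_norm, norm_norm, norm_mul]
      have h2 : ‖b * (q ^ (-(n : ℤ)))⁻¹‖ ≤ 1/2 := by
        rw [zpow_neg, inv_inv, zpow_natCast]; exact hn
      exact mul_le_mul_of_nonneg_right h2 (norm_nonneg _)
    exact Summable.of_nat_of_neg hpos hneg
  -- Tannery's theorem
  set F : ℕ → ℤ → ℂ := fun m K => G q (2 * m) (K + m) * t a b K with hF
  have h_bound : ∀ m K, ‖F m K‖ ≤ (A / (B * B)) * ‖t a b K‖ := by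
    intro m K
    rw [hF, norm_mul]
    exact mul_le_mul_of_nonneg_right (G_norm_le hab hDA hB0 hBD _ _) (norm_nonneg _)
  have h_lim : ∀ K : ℤ, Tendsto (fun m => F m K) atTop (𝓝 (E⁻¹ * t a b K)) := by
    intro K
    have h1 : Tendsto (fun m : ℕ => (K + (m : ℤ)).toNat) atTop atTop :=
      Filter.tendsto_atTop.2 fun bnd => eventually_atTop.2
        ⟨bnd + K.natAbs, fun m hm => by omega⟩
    have h2 : Tendsto (fun m : ℕ => 2 * m - (K + (m : ℤ)).toNat) atTop atTop :=
      Filter.tendsto_atTop.2 fun bnd => eventually_atTop.2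
        ⟨bnd + K.natAbs, fun m hm => by omega⟩
    have h3 : Tendsto (fun m : ℕ => 2 * m) atTop atTop :=
      Filter.tendsto_atTop.2 fun bnd => eventually_atTop.2 ⟨bnd, fun m hm => by omega⟩
    have hdiv : Tendsto (fun m : ℕ =>
        D q (2 * m) / (D q ((K + (m : ℤ)).toNat) * D q (2 * m - (K + (m : ℤ)).toNat)))
        atTop (𝓝 (E / (E * E))) :=
      (hTD.comp h3).div ((hTD.comp h1).mul (hTD.comp h2)) (mul_ne_zero hE0 hE0)
    have hEE : E / (E * E) = E⁻¹ := by field_simp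
    rw [hEE] at hdiv
    have hev : ∀ᶠ m : ℕ in atTop, D q (2 * m) /
        (D q ((K + (m : ℤ)).toNat) * D q (2 * m - (K + (m : ℤ)).toNat)) = G q (2 * m) (K + m) := by
      filter_upwards [eventually_ge_atTop K.natAbs] with m hm
      rw [G, if_pos ⟨by omega, by omega⟩]
    exact ((hdiv.congr' hev).mul_const (t a b K))
  have hTan : Tendsto (fun m => ∑' K : ℤ, F m K) atTop (𝓝 (∑' K : ℤ, E⁻¹ * t a b K)) :=
    tendsto_tsum_of_dominated_convergence (hsum.mul_left (A / (B * B))) h_lim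
      (Eventually.of_forall h_bound)
  have hFS : ∀ m, ∑' K : ℤ, F m K
      = ∏ k ∈ Finset.range m, ((1 + a * q ^ k) * (1 + b * q ^ k)) := by
    intro m
    rw [← finite_identity ha hb hab m]
    refine tsum_eq_sum ?_
    intro K hK
    simp only [Finset.mem_Icc, not_and_or, not_le] at hK
    show G q (2 * m) (K + (m : ℤ)) * t a b K = 0
    rcases hK with h | h
    · rw [G_of_lt (by omega), zero_mul]
    · rw [G_of_gt (by push_cast; omega), zero_mul]
  have hTan2 : Tendsto (fun m => ∏ k ∈ Finset.range m, ((1 + a * q ^ k) * (1 + b * q ^ k)))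
      atTop (𝓝 (∑' K : ℤ, E⁻¹ * t a b K)) := by
    refine hTan.congr fun m => hFS m
  have hTan3 : Tendsto (fun m => ∏ k ∈ Finset.range m, ((1 + a * q ^ k) * (1 + b * q ^ k)))
      atTop (𝓝 (Pa * Pb)) := by
    have := hTa.mul hTb
    refine this.congr fun m => ?_
    rw [← Finset.prod_mul_distrib]
  have hkey : ∑' K : ℤ, E⁻¹ * t a b K = Pa * Pb := tendsto_nhds_unique hTan2 hTan3
  rw [tsum_mul_left] at hkey
  have hfinal : ∑' K : ℤ, t a b K = Pa * Pb * E := by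
    have h1 : E * (E⁻¹ * ∑' K : ℤ, t a b K) = E * (Pa * Pb) := by rw [hkey]
    rw [← mul_assoc, mul_inv_cancel₀ hE0, one_mul] at h1
    rw [h1]; ring
  exact hfinal

end RTP

/-- Ramanujan's general theta function product formula:
`f(a,b) = ∑_{n ∈ ℤ} a^(n(n+1)/2) b^(n(n-1)/2) = (−a; ab)_∞ (−b; ab)_∞ (ab; ab)_∞`. -/
theorem ramanujan_theta_product (a b : ℂ) (hab : ‖a * b‖ < 1) :
    ∑' n : ℤ, a ^ (n * (n + 1) / 2) * b ^ (n * (n - 1) / 2) =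
      (∏' n : ℕ, (1 + a * (a * b) ^ n)) * (∏' n : ℕ, (1 + b * (a * b) ^ n)) *
        ∏' n : ℕ, (1 - (a * b) ^ (n + 1)) := by
  by_cases ha : a = 0
  · subst ha
    have hL : ∑' n : ℤ, (0 : ℂ) ^ (n * (n + 1) / 2) * b ^ (n * (n - 1) / 2) = 1 + b := by
      rw [tsum_eq_sum (s := ({0, -1} : Finset ℤ)) ?_]
      · norm_num
      · intro n hn
        simp only [Finset.mem_insert, Finset.mem_singleton, not_or] at hn
        have h2 : 2 ≤ n * (n + 1) := by
          rcases lt_or_ge 0 n with h | h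
          · nlinarith
          · have : n ≤ -2 := by omega
            nlinarith
        have h3 : n * (n + 1) / 2 ≠ 0 := by
          have := Int.ediv_le_ediv (by norm_num : (0:ℤ) < 2) h2
          norm_num at this
          omega
        rw [zero_zpow _ h3, zero_mul]
    rw [hL]
    have h1 : ∏' n : ℕ, (1 + (0:ℂ) * ((0:ℂ) * b) ^ n) = 1 := by simp
    have h2 : ∏' n : ℕ, (1 + b * ((0:ℂ) * b) ^ n) = 1 + b := by
      have hp : HasProd (fun n : ℕ => 1 + b * ((0:ℂ) * b) ^ n) (1 + b) := by
        have := hasProd_single (f := fun n : ℕ => 1 + b * ((0:ℂ) * b) ^ n) 0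
          (fun n hn => by simp [zero_pow hn])
        simpa using this
      exact hp.tprod_eq
    have h3 : ∏' n : ℕ, (1 - ((0:ℂ) * b) ^ (n + 1)) = 1 := by simp
    rw [h1, h2, h3]
    ring
  by_cases hb : b = 0
  · subst hb
    have hL : ∑' n : ℤ, a ^ (n * (n + 1) / 2) * (0 : ℂ) ^ (n * (n - 1) / 2) = 1 + a := by
      rw [tsum_eq_sum (s := ({0, 1} : Finset ℤ)) ?_]
      · norm_num
      · intro n hn
        simp only [Finset.mem_insert, Finset.mem_singleton, not_or] at hn
        have h2 : 2 ≤ n * (n - 1) := by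
          rcases lt_or_ge 1 n with h | h
          · nlinarith
          · have : n ≤ -1 := by omega
            nlinarith
        have h3 : n * (n - 1) / 2 ≠ 0 := by
          have := Int.ediv_le_ediv (by norm_num : (0:ℤ) < 2) h2
          norm_num at this
          omega
        rw [zero_zpow _ h3, mul_zero]
    rw [hL]
    have h1 : ∏' n : ℕ, (1 + a * (a * (0:ℂ)) ^ n) = 1 + a := by
      have hp : HasProd (fun n : ℕ => 1 + a * (a * (0:ℂ)) ^ n) (1 + a) := by
        have := hasProd_single (f := fun n : ℕ => 1 + a * (a * (0:ℂ)) ^ n) 0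
          (fun n hn => by simp [zero_pow hn])
        simpa using this
      exact hp.tprod_eq
    have h2 : ∏' n : ℕ, (1 + (0:ℂ) * (a * (0:ℂ)) ^ n) = 1 := by simp
    have h3 : ∏' n : ℕ, (1 - (a * (0:ℂ)) ^ (n + 1)) = 1 := by simp
    rw [h1, h2, h3]
    ring
  exact RTP.main_ne a b ha hb hab
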